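/- arXiv:1710.05907 — 2 statements merged into one kernel-verified Lean document; each statement's English description precedes it below -/
import Mathlib

section
/- Let Ω ⊆ ℝ⁴ be open with coordinates (t,x,y,z), and let u : Ω → ℝ be smooth with u_x ≠ 0 on Ω and satisfying G[u] = 0 on Ω. Let U : Ω → ℝ be smooth with ℓ_G(U) = 0 on Ω, and let Ũ : Ω → ℝ be smooth and satisfy on Ω the two relations Ũ_z − (u_{xz}/u_x) Ũ = U_t − (u_t/u_x) U_x and Ũ_x − (u_{xx}/u_x) Ũ = U_y − (u_y/u_x) U_x. Then ℓ_G(Ũ) = 0 on Ω; that is, these relations define a recursion operator mapping symmetries of the equation D_z(u_y/u_x) − D_x(u_t/u_x) = 0 to symmetries. -/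
/- Coordinates on ℝ⁴: t = 0, x = 1, y = 2, z = 3. -/

/-- Partial derivative of `f` in the `i`-th coordinate direction. -/
noncomputable def pd (i : Fin 4) (f : (Fin 4 → ℝ) → ℝ) (p : Fin 4 → ℝ) : ℝ :=
  fderiv ℝ f p (Pi.single i 1)

/-- The four-dimensional equation
`G[u] = u_x u_{yz} − u_y u_{xz} − u_x u_{xt} + u_t u_{xx}`. -/
noncomputable def Gop (u : (Fin 4 → ℝ) → ℝ) (p : Fin 4 → ℝ) : ℝ :=
  pd 1 u p * pd 2 (pd 3 u) p - pd 2 u p * pd 1 (pd 3 u) p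
    - pd 1 u p * pd 1 (pd 0 u) p + pd 0 u p * pd 1 (pd 1 u) p

/-- The linearization `ℓ_G(W)` of `G` at `u`, applied to `W`. -/
noncomputable def ellG (u W : (Fin 4 → ℝ) → ℝ) (p : Fin 4 → ℝ) : ℝ :=
  pd 1 W p * pd 2 (pd 3 u) p + pd 1 u p * pd 2 (pd 3 W) p
    - pd 2 W p * pd 1 (pd 3 u) p - pd 2 u p * pd 1 (pd 3 W) p
    - pd 1 W p * pd 1 (pd 0 u) p - pd 1 u p * pd 1 (pd 0 W) p
    + pd 0 W p * pd 1 (pd 1 u) p + pd 0 u p * pd 1 (pd 1 W) p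

/-! ### Auxiliary lemmas about `pd` -/

lemma pd_mul {f g : (Fin 4 → ℝ) → ℝ} {p : Fin 4 → ℝ} (i : Fin 4)
    (hf : DifferentiableAt ℝ f p) (hg : DifferentiableAt ℝ g p) :
    pd i (fun q => f q * g q) p = pd i f p * g p + f p * pd i g p := by
  unfold pd
  rw [fderiv_fun_mul hf hg]
  simp only [ContinuousLinearMap.add_apply, ContinuousLinearMap.smul_apply, smul_eq_mul]
  ring

lemma pd_sub {f g : (Fin 4 → ℝ) → ℝ} {p : Fin 4 → ℝ} (i : Fin 4)
    (hf : DifferentiableAt ℝ f p) (hg : DifferentiableAt ℝ g p) :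
    pd i (fun q => f q - g q) p = pd i f p - pd i g p := by
  unfold pd
  rw [fderiv_fun_sub hf hg]
  simp

lemma contDiffOn_pd {Ω : Set (Fin 4 → ℝ)} (hΩ : IsOpen Ω) {f : (Fin 4 → ℝ) → ℝ}
    (hf : ContDiffOn ℝ (⊤ : ℕ∞) f Ω) (i : Fin 4) :
    ContDiffOn ℝ (⊤ : ℕ∞) (pd i f) Ω := by
  have h := hf.fderiv_of_isOpen (m := ((⊤:ℕ∞) : WithTop ℕ∞)) hΩ (le_of_eq rfl)
  exact h.clm_apply contDiffOn_const

lemma diffAt {Ω : Set (Fin 4 → ℝ)} (hΩ : IsOpen Ω) {f : (Fin 4 → ℝ) → ℝ}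
    (hf : ContDiffOn ℝ (⊤ : ℕ∞) f Ω) {p : Fin 4 → ℝ} (hp : p ∈ Ω) :
    DifferentiableAt ℝ f p :=
  (hf.contDiffAt (hΩ.mem_nhds hp)).differentiableAt (by decide)

lemma pd_comm {Ω : Set (Fin 4 → ℝ)} (hΩ : IsOpen Ω) {f : (Fin 4 → ℝ) → ℝ}
    (hf : ContDiffOn ℝ (⊤ : ℕ∞) f Ω) {p : Fin 4 → ℝ} (hp : p ∈ Ω) (i j : Fin 4) :
    pd i (pd j f) p = pd j (pd i f) p := by
  have hsymm : IsSymmSndFDerivAt ℝ f p :=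
    (hf.contDiffAt (hΩ.mem_nhds hp)).isSymmSndFDerivAt
      (by rw [minSmoothness_of_isRCLikeNormedField]; exact WithTop.coe_le_coe.mpr le_top)
  have hdf : DifferentiableAt ℝ (fderiv ℝ f) p :=
    ((hf.fderiv_of_isOpen (m := ((⊤:ℕ∞) : WithTop ℕ∞)) hΩ (le_of_eq rfl)).contDiffAt
      (hΩ.mem_nhds hp)).differentiableAt (by decide)
  have key : ∀ v w : Fin 4 → ℝ,
      fderiv ℝ (fun q => fderiv ℝ f q v) p w = fderiv ℝ (fderiv ℝ f) p w v := by
    intro v w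
    rw [fderiv_clm_apply hdf (differentiableAt_const v)]
    simp
  unfold pd
  rw [key, key]
  exact hsymm _ _

lemma pd_congr {Ω : Set (Fin 4 → ℝ)} (hΩ : IsOpen Ω) {f g : (Fin 4 → ℝ) → ℝ}
    {p : Fin 4 → ℝ} (hp : p ∈ Ω) (h : ∀ q ∈ Ω, f q = g q) (i : Fin 4) :
    pd i f p = pd i g p := by
  unfold pd
  rw [Filter.EventuallyEq.fderiv_eq (Filter.eventuallyEq_of_mem (hΩ.mem_nhds hp) h)]

/-- Differentiating a relation of the form `a b - c d = e f - g h` valid on an open set. -/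
lemma pd_rel {Ω : Set (Fin 4 → ℝ)} (hΩ : IsOpen Ω)
    {a b c d e f g h : (Fin 4 → ℝ) → ℝ} {p : Fin 4 → ℝ} (hp : p ∈ Ω)
    (ha : DifferentiableAt ℝ a p) (hb : DifferentiableAt ℝ b p)
    (hc : DifferentiableAt ℝ c p) (hd : DifferentiableAt ℝ d p)
    (he : DifferentiableAt ℝ e p) (hf : DifferentiableAt ℝ f p)
    (hg : DifferentiableAt ℝ g p) (hh : DifferentiableAt ℝ h p)
    (heq : ∀ q ∈ Ω, a q * b q - c q * d q = e q * f q - g q * h q) (i : Fin 4) :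
    pd i a p * b p + a p * pd i b p - (pd i c p * d p + c p * pd i d p)
      = pd i e p * f p + e p * pd i f p - (pd i g p * h p + g p * pd i h p) := by
  have h1 : pd i (fun q => a q * b q - c q * d q) p
      = pd i (fun q => e q * f q - g q * h q) p := pd_congr hΩ hp heq i
  rw [pd_sub (f := fun q => a q * b q) (g := fun q => c q * d q) i (ha.mul hb) (hc.mul hd), pd_mul i ha hb, pd_mul i hc hd,
      pd_sub (f := fun q => e q * f q) (g := fun q => g q * h q) i (he.mul hf) (hg.mul hh), pd_mul i he hf, pd_mul i hg hh] at h1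
  linarith [h1]

theorem recursion_operator_dfk_four_dim
    (Ω : Set (Fin 4 → ℝ)) (hΩ : IsOpen Ω)
    (u U Ut : (Fin 4 → ℝ) → ℝ)
    (hu : ContDiffOn ℝ (⊤ : ℕ∞) u Ω)
    (hU : ContDiffOn ℝ (⊤ : ℕ∞) U Ω)
    (hUt : ContDiffOn ℝ (⊤ : ℕ∞) Ut Ω)
    (hux : ∀ p ∈ Ω, pd 1 u p ≠ 0)
    (hG : ∀ p ∈ Ω, Gop u p = 0)
    (hsym : ∀ p ∈ Ω, ellG u U p = 0)
    -- Ũ_z − (u_{xz}/u_x) Ũ = U_t − (u_t/u_x) U_x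
    (hrel1 : ∀ p ∈ Ω,
      pd 3 Ut p - (pd 1 (pd 3 u) p / pd 1 u p) * Ut p =
        pd 0 U p - (pd 0 u p / pd 1 u p) * pd 1 U p)
    -- Ũ_x − (u_{xx}/u_x) Ũ = U_y − (u_y/u_x) U_x
    (hrel2 : ∀ p ∈ Ω,
      pd 1 Ut p - (pd 1 (pd 1 u) p / pd 1 u p) * Ut p =
        pd 2 U p - (pd 2 u p / pd 1 u p) * pd 1 U p) :
    ∀ p ∈ Ω, ellG u Ut p = 0 := by
  intro p hp
  -- product forms of the relations
  have hE1' : ∀ q ∈ Ω, pd 1 u q * pd 3 Ut q - pd 1 (pd 3 u) q * Ut q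
      = pd 1 u q * pd 0 U q - pd 0 u q * pd 1 U q := by
    intro q hq
    have h := hrel1 q hq
    have hx := hux q hq
    field_simp at h
    linear_combination h
  have hE2' : ∀ q ∈ Ω, pd 1 u q * pd 1 Ut q - pd 1 (pd 1 u) q * Ut q
      = pd 1 u q * pd 2 U q - pd 2 u q * pd 1 U q := by
    intro q hq
    have h := hrel2 q hq
    have hx := hux q hq
    field_simp at h
    linear_combination h
  have hG' : ∀ q ∈ Ω, pd 1 u q * pd 2 (pd 3 u) q - pd 2 u q * pd 1 (pd 3 u) q
      = pd 1 u q * pd 1 (pd 0 u) q - pd 0 u q * pd 1 (pd 1 u) q := by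
    intro q hq
    have h := hG q hq
    unfold Gop at h
    linear_combination h
  -- differentiability bank
  have du : ∀ i, DifferentiableAt ℝ (pd i u) p := fun i => diffAt hΩ (contDiffOn_pd hΩ hu i) hp
  have du2 : ∀ i j, DifferentiableAt ℝ (pd i (pd j u)) p :=
    fun i j => diffAt hΩ (contDiffOn_pd hΩ (contDiffOn_pd hΩ hu j) i) hp
  have dU : ∀ i, DifferentiableAt ℝ (pd i U) p := fun i => diffAt hΩ (contDiffOn_pd hΩ hU i) hp
  have dUt0 : DifferentiableAt ℝ Ut p := diffAt hΩ hUt hp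
  have dUt : ∀ i, DifferentiableAt ℝ (pd i Ut) p :=
    fun i => diffAt hΩ (contDiffOn_pd hΩ hUt i) hp
  -- differentiated relations at p
  have hD3E2 := pd_rel hΩ hp (du 1) (dUt 1) (du2 1 1) dUt0 (du 1) (dU 2) (du 2) (dU 1) hE2' 3
  have hD0E2 := pd_rel hΩ hp (du 1) (dUt 1) (du2 1 1) dUt0 (du 1) (dU 2) (du 2) (dU 1) hE2' 0
  have hD1E2 := pd_rel hΩ hp (du 1) (dUt 1) (du2 1 1) dUt0 (du 1) (dU 2) (du 2) (dU 1) hE2' 1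
  have hD2E1 := pd_rel hΩ hp (du 1) (dUt 3) (du2 1 3) dUt0 (du 1) (dU 0) (du 0) (dU 1) hE1' 2
  have hD1G := pd_rel hΩ hp (du 1) (du2 2 3) (du 2) (du2 1 3) (du 1) (du2 1 0) (du 0)
    (du2 1 1) hG' 1
  -- symmetry of second partial derivatives: canonical forms
  have c31u : pd 3 (pd 1 u) p = pd 1 (pd 3 u) p := pd_comm hΩ hu hp 3 1
  have c32u : pd 3 (pd 2 u) p = pd 2 (pd 3 u) p := pd_comm hΩ hu hp 3 2
  have c01u : pd 0 (pd 1 u) p = pd 1 (pd 0 u) p := pd_comm hΩ hu hp 0 1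
  have c21u : pd 2 (pd 1 u) p = pd 1 (pd 2 u) p := pd_comm hΩ hu hp 2 1
  have c20u : pd 2 (pd 0 u) p = pd 0 (pd 2 u) p := pd_comm hΩ hu hp 2 0
  have c311 : pd 3 (pd 1 (pd 1 u)) p = pd 1 (pd 1 (pd 3 u)) p := by
    rw [pd_comm hΩ (contDiffOn_pd hΩ hu 1) hp 3 1]
    exact pd_congr hΩ hp (fun q hq => pd_comm hΩ hu hq 3 1) 1
  have c011 : pd 0 (pd 1 (pd 1 u)) p = pd 1 (pd 1 (pd 0 u)) p := by
    rw [pd_comm hΩ (contDiffOn_pd hΩ hu 1) hp 0 1]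
    exact pd_congr hΩ hp (fun q hq => pd_comm hΩ hu hq 0 1) 1
  have c213 : pd 2 (pd 1 (pd 3 u)) p = pd 1 (pd 2 (pd 3 u)) p :=
    pd_comm hΩ (contDiffOn_pd hΩ hu 3) hp 2 1
  have c32U : pd 3 (pd 2 U) p = pd 2 (pd 3 U) p := pd_comm hΩ hU hp 3 2
  have c31U : pd 3 (pd 1 U) p = pd 1 (pd 3 U) p := pd_comm hΩ hU hp 3 1
  have c01U : pd 0 (pd 1 U) p = pd 1 (pd 0 U) p := pd_comm hΩ hU hp 0 1
  have c21U : pd 2 (pd 1 U) p = pd 1 (pd 2 U) p := pd_comm hΩ hU hp 2 1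
  have c20U : pd 2 (pd 0 U) p = pd 0 (pd 2 U) p := pd_comm hΩ hU hp 2 0
  have c31Ut : pd 3 (pd 1 Ut) p = pd 1 (pd 3 Ut) p := pd_comm hΩ hUt hp 3 1
  have c01Ut : pd 0 (pd 1 Ut) p = pd 1 (pd 0 Ut) p := pd_comm hΩ hUt hp 0 1
  rw [c31u, c311, c32u, c32U, c31U, c31Ut] at hD3E2
  rw [c01u, c011, c01U, c01Ut] at hD0E2
  rw [c21u, c213, c20u, c20U, c21U] at hD2E1
  -- algebra
  have hE1p := hE1' p hp
  have hE2p := hE2' p hp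
  have hGp := hG' p hp
  have hELp := hsym p hp
  unfold ellG at hELp
  have hxp := hux p hp
  have key : pd 1 u p ^ 2 * ellG u Ut p = 0 := by
    unfold ellG
    linear_combination (pd 1 u p ^ 2) * hD2E1 - (pd 1 u p * pd 2 u p) * hD3E2
      - (pd 1 u p ^ 2) * hD0E2 + (pd 0 u p * pd 1 u p) * hD1E2
      + (pd 1 u p * Ut p) * hD1G
      + (pd 1 u p * pd 2 (pd 3 u) p + pd 2 u p * pd 1 (pd 3 u) p) * hE2p
      - (pd 1 u p * pd 1 (pd 2 u) p + pd 2 u p * pd 1 (pd 1 u) p) * hE1p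
      - (pd 1 u p * pd 2 u p) * hELp
      + (pd 1 U p * pd 2 u p + pd 2 U p * pd 1 u p) * hGp
  have h2 : pd 1 u p ^ 2 ≠ 0 := pow_ne_zero _ hxp
  rcases mul_eq_zero.mp key with h | h
  · exact absurd h h2
  · exact h
end

section
/- Let Ω ⊆ ℝ⁴ be open with coordinates (t,x,y,z), let u : Ω → ℝ be smooth with u_x ≠ 0 on Ω and G[u] = 0 on Ω, and let U : Ω → ℝ be smooth with ℓ_G(U) = 0 on Ω. Define R₁ := U_t − (u_t/u_x) U_x and R₂ := U_y − (u_y/u_x) U_x. Then the identity ∂_x(R₁) − ∂_z(R₂) = (u_{xx}/u_x) R₁ − (u_{xz}/u_x) R₂ holds at every point of Ω; consequently the system Ũ_z = (u_{xz}/u_x) Ũ + R₁, Ũ_x = (u_{xx}/u_x) Ũ + R₂ defining the recursion operator satisfies the cross-derivative (Frobenius) compatibility condition whenever U is a symmetry. -/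
/-- `R₁ = U_t − (u_t/u_x) U_x`. -/
noncomputable def R₁ (u U : (Fin 4 → ℝ) → ℝ) (p : Fin 4 → ℝ) : ℝ :=
  pd 0 U p - (pd 0 u p / pd 1 u p) * pd 1 U p

/-- `R₂ = U_y − (u_y/u_x) U_x`. -/
noncomputable def R₂ (u U : (Fin 4 → ℝ) → ℝ) (p : Fin 4 → ℝ) : ℝ :=
  pd 2 U p - (pd 2 u p / pd 1 u p) * pd 1 U p

lemma pd_contDiffAt {f : (Fin 4 → ℝ) → ℝ} {p : Fin 4 → ℝ}
    (hf : ContDiffAt ℝ (⊤ : ℕ∞) f p) (j : Fin 4) :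
    ContDiffAt ℝ (⊤ : ℕ∞) (pd j f) p := by
  have h := hf.fderiv_right (m := (⊤ : ℕ∞)) (by exact_mod_cast le_top)
  exact h.clm_apply contDiffAt_const

lemma pd_pd_eq {f : (Fin 4 → ℝ) → ℝ} {p : Fin 4 → ℝ}
    (hf : ContDiffAt ℝ (⊤ : ℕ∞) f p) (i j : Fin 4) :
    pd i (pd j f) p = fderiv ℝ (fderiv ℝ f) p (Pi.single i 1) (Pi.single j 1) := by
  have hdf : DifferentiableAt ℝ (fderiv ℝ f) p :=
    (hf.fderiv_right (m := (⊤ : ℕ∞)) (by exact_mod_cast le_top)).differentiableAt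
      (by simp)
  show fderiv ℝ (fun q => fderiv ℝ f q (Pi.single j 1)) p (Pi.single i 1) = _
  rw [fderiv_clm_apply hdf (differentiableAt_const _)]
  simp

lemma pd_symm {f : (Fin 4 → ℝ) → ℝ} {p : Fin 4 → ℝ}
    (hf : ContDiffAt ℝ (⊤ : ℕ∞) f p) (i j : Fin 4) :
    pd i (pd j f) p = pd j (pd i f) p := by
  rw [pd_pd_eq hf, pd_pd_eq hf]
  exact hf.isSymmSndFDerivAt (by rw [minSmoothness_of_isRCLikeNormedField]; exact WithTop.coe_le_coe.mpr (le_top : (2 : ℕ∞) ≤ ⊤)) _ _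

lemma pd_comb {p : Fin 4 → ℝ} (i : Fin 4) (f g h k : (Fin 4 → ℝ) → ℝ)
    (hf : DifferentiableAt ℝ f p) (hg : DifferentiableAt ℝ g p)
    (hh : DifferentiableAt ℝ h p) (hk : DifferentiableAt ℝ k p) (h0 : h p ≠ 0) :
    pd i (fun q => f q - g q / h q * k q) p
      = pd i f p - ((pd i g p * h p - g p * pd i h p) / (h p)^2) * k p
        - (g p / h p) * pd i k p := by
  have hinv : HasFDerivAt (fun q => (h q)⁻¹) ((-((h p)^2)⁻¹) • fderiv ℝ h p) p :=
    (hasDerivAt_inv h0).comp_hasFDerivAt p hh.hasFDerivAt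
  have hm := (hg.hasFDerivAt.mul hinv).mul hk.hasFDerivAt
  have hF := hf.hasFDerivAt.sub hm
  simp only [div_eq_mul_inv]
  unfold pd
  rw [show (fun q => f q - g q * (h q)⁻¹ * k q) = (f - (g * fun q => (h q)⁻¹) * k) from rfl, hF.fderiv]
  simp only [ContinuousLinearMap.coe_sub', Pi.sub_apply, ContinuousLinearMap.add_apply,
    ContinuousLinearMap.coe_smul', Pi.smul_apply, smul_eq_mul, Pi.mul_apply]
  field_simp
  ring

/-- Frobenius compatibility of the recursion system:
`∂_x(R₁) − ∂_z(R₂) = (u_{xx}/u_x) R₁ − (u_{xz}/u_x) R₂` on `Ω`. -/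
theorem recursion_system_compatible_dfk_four_dim
    (Ω : Set (Fin 4 → ℝ)) (hΩ : IsOpen Ω)
    (u U : (Fin 4 → ℝ) → ℝ)
    (hu : ContDiffOn ℝ (⊤ : ℕ∞) u Ω)
    (hU : ContDiffOn ℝ (⊤ : ℕ∞) U Ω)
    (hux : ∀ p ∈ Ω, pd 1 u p ≠ 0)
    (hG : ∀ p ∈ Ω, Gop u p = 0)
    (hsym : ∀ p ∈ Ω, ellG u U p = 0) :
    ∀ p ∈ Ω,
      pd 1 (R₁ u U) p - pd 3 (R₂ u U) p =
        (pd 1 (pd 1 u) p / pd 1 u p) * R₁ u U p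
          - (pd 1 (pd 3 u) p / pd 1 u p) * R₂ u U p := by
  intro p hp
  have cu : ContDiffAt ℝ (⊤ : ℕ∞) u p := hu.contDiffAt (hΩ.mem_nhds hp)
  have cU : ContDiffAt ℝ (⊤ : ℕ∞) U p := hU.contDiffAt (hΩ.mem_nhds hp)
  have hb : pd 1 u p ≠ 0 := hux p hp
  have du0 : DifferentiableAt ℝ (pd 0 u) p :=
    (pd_contDiffAt cu 0).differentiableAt (by simp)
  have du1 : DifferentiableAt ℝ (pd 1 u) p :=
    (pd_contDiffAt cu 1).differentiableAt (by simp)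
  have du2 : DifferentiableAt ℝ (pd 2 u) p :=
    (pd_contDiffAt cu 2).differentiableAt (by simp)
  have dU0 : DifferentiableAt ℝ (pd 0 U) p :=
    (pd_contDiffAt cU 0).differentiableAt (by simp)
  have dU1 : DifferentiableAt ℝ (pd 1 U) p :=
    (pd_contDiffAt cU 1).differentiableAt (by simp)
  have dU2 : DifferentiableAt ℝ (pd 2 U) p :=
    (pd_contDiffAt cU 2).differentiableAt (by simp)
  have e1 : pd 1 (R₁ u U) p
      = pd 1 (pd 0 U) p
        - ((pd 1 (pd 0 u) p * pd 1 u p - pd 0 u p * pd 1 (pd 1 u) p) / (pd 1 u p)^2) * pd 1 U p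
        - (pd 0 u p / pd 1 u p) * pd 1 (pd 1 U) p := by
    have : R₁ u U = fun q => pd 0 U q - pd 0 u q / pd 1 u q * pd 1 U q := rfl
    rw [this, pd_comb 1 _ _ _ _ dU0 du0 du1 dU1 hb]
  have e2 : pd 3 (R₂ u U) p
      = pd 3 (pd 2 U) p
        - ((pd 3 (pd 2 u) p * pd 1 u p - pd 2 u p * pd 3 (pd 1 u) p) / (pd 1 u p)^2) * pd 1 U p
        - (pd 2 u p / pd 1 u p) * pd 3 (pd 1 U) p := by
    have : R₂ u U = fun q => pd 2 U q - pd 2 u q / pd 1 u q * pd 1 U q := rfl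
    rw [this, pd_comb 3 _ _ _ _ dU2 du2 du1 dU1 hb]
  have s1 : pd 3 (pd 2 U) p = pd 2 (pd 3 U) p := pd_symm cU 3 2
  have s2 : pd 3 (pd 2 u) p = pd 2 (pd 3 u) p := pd_symm cu 3 2
  have s3 : pd 3 (pd 1 u) p = pd 1 (pd 3 u) p := pd_symm cu 3 1
  have s4 : pd 3 (pd 1 U) p = pd 1 (pd 3 U) p := pd_symm cU 3 1
  have hGp := hG p hp
  have hEp := hsym p hp
  unfold Gop at hGp
  unfold ellG at hEp
  rw [e1, e2, s1, s2, s3, s4]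
  show _ = (pd 1 (pd 1 u) p / pd 1 u p) * (pd 0 U p - (pd 0 u p / pd 1 u p) * pd 1 U p)
          - (pd 1 (pd 3 u) p / pd 1 u p) * (pd 2 U p - (pd 2 u p / pd 1 u p) * pd 1 U p)
  have key :
      (pd 1 (pd 0 U) p
        - ((pd 1 (pd 0 u) p * pd 1 u p - pd 0 u p * pd 1 (pd 1 u) p) / (pd 1 u p)^2) * pd 1 U p
        - (pd 0 u p / pd 1 u p) * pd 1 (pd 1 U) p)
      - (pd 2 (pd 3 U) p
        - ((pd 2 (pd 3 u) p * pd 1 u p - pd 2 u p * pd 1 (pd 3 u) p) / (pd 1 u p)^2) * pd 1 U p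
        - (pd 2 u p / pd 1 u p) * pd 1 (pd 3 U) p)
      - ((pd 1 (pd 1 u) p / pd 1 u p) * (pd 0 U p - (pd 0 u p / pd 1 u p) * pd 1 U p)
        - (pd 1 (pd 3 u) p / pd 1 u p) * (pd 2 U p - (pd 2 u p / pd 1 u p) * pd 1 U p))
      = (2 * pd 1 U p *
          (pd 1 u p * pd 2 (pd 3 u) p - pd 2 u p * pd 1 (pd 3 u) p
            - pd 1 u p * pd 1 (pd 0 u) p + pd 0 u p * pd 1 (pd 1 u) p)
        - pd 1 u p *
          (pd 1 U p * pd 2 (pd 3 u) p + pd 1 u p * pd 2 (pd 3 U) p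
            - pd 2 U p * pd 1 (pd 3 u) p - pd 2 u p * pd 1 (pd 3 U) p
            - pd 1 U p * pd 1 (pd 0 u) p - pd 1 u p * pd 1 (pd 0 U) p
            + pd 0 U p * pd 1 (pd 1 u) p + pd 0 u p * pd 1 (pd 1 U) p))
        / (pd 1 u p)^2 := by
    field_simp
    ring
  rw [hGp, hEp] at key
  norm_num at key
  linarith [key]
end
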